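/- Let M ∈ ℂ with Re M > 0 and Re M ≠ 1/2, and let a > −1 be real. Then there exists a constant C > 0, depending only on M and a, such that for all real z > 1: ∫₀^{z−1} y^a ((z+1)² − y²)^{−1/2 + Re M} · | F(1/2 − M, 1/2 − M; 1; ((z−1)² − y²)/((z+1)² − y²)) | dy ≤ C (z−1)^{1+a} z^{Re M − 1/2} if 0 < Re M < 1/2, and ≤ C (z−1)^{1+a} (z+1)^{2 Re M − 1} if Re M > 1/2. -/

import Mathlib

open MeasureTheory

/-- The Gauss hypergeometric function `F(a,b;c;x)` as a sum of the hypergeometric series. -/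
noncomputable def GaussF (a b c x : ℂ) : ℂ :=
  ∑' n : ℕ, (ascPochhammer ℂ n).eval a * (ascPochhammer ℂ n).eval b /
    ((ascPochhammer ℂ n).eval c * (n.factorial : ℂ)) * x ^ n

lemma gaussF_bound (M : ℂ) (hM : 0 < M.re) :
    ∃ K : ℝ, 1 ≤ K ∧ ∀ x : ℝ, 0 ≤ x → x < 1 →
      ‖GaussF (1/2 - M) (1/2 - M) 1 (x : ℂ)‖ ≤ K := by
  set q : ℂ := 1/2 - M with hq
  set c : ℕ → ℝ := fun n =>
    ‖(ascPochhammer ℂ n).eval q‖ ^ 2 / (n.factorial : ℝ) ^ 2 with hcdef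
  have hc0 : c 0 = 1 := by simp [hcdef]
  have hcnonneg : ∀ n, 0 ≤ c n := fun n => by positivity
  have hcsucc : ∀ n : ℕ, c (n + 1) = c n * ‖q + n‖ ^ 2 / ((n : ℝ) + 1) ^ 2 := by
    intro n
    have h1 : (ascPochhammer ℂ (n + 1)).eval q
        = (ascPochhammer ℂ n).eval q * (q + n) := by
      rw [ascPochhammer_succ_right]
      simp [Polynomial.eval_mul]
    rw [hcdef]
    simp only [h1, map_mul, norm_mul, Nat.factorial_succ, Nat.cast_mul, Nat.cast_add, Nat.cast_one]
    have hfac : (0:ℝ) < (n.factorial : ℝ) := by exact_mod_cast n.factorial_pos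
    field_simp
  set s : ℝ := 1 + M.re with hs
  have hs1 : 1 < s := by rw [hs]; linarith
  obtain ⟨N, hN1, hNkey⟩ : ∃ N : ℕ, 1 ≤ N ∧ ∀ n : ℕ, N ≤ n →
      ‖q + n‖ ^ 2 * ((n : ℝ) + 1) ^ s ≤ (n : ℝ) ^ s * ((n : ℝ) + 1) ^ 2 := by
    refine ⟨⌈(s + q.re ^ 2 + q.im ^ 2) / M.re⌉₊ + 1, le_add_self, ?_⟩
    intro n hn
    have hnpos : (0 : ℝ) < n := by
      have : 1 ≤ n := le_trans le_add_self hn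
      exact_mod_cast this
    have hn' : (s + q.re ^ 2 + q.im ^ 2) / M.re ≤ (n : ℝ) := by
      calc (s + q.re ^ 2 + q.im ^ 2) / M.re ≤ (⌈(s + q.re ^ 2 + q.im ^ 2) / M.re⌉₊ : ℝ) :=
            Nat.le_ceil _
        _ ≤ (n : ℝ) := by exact_mod_cast le_trans (Nat.le_succ _) hn
    have hMn : s + q.re ^ 2 + q.im ^ 2 ≤ M.re * n := by
      rw [div_le_iff₀ hM] at hn'; linarith
    have habs : ‖q + n‖ ^ 2 = (q.re + n) ^ 2 + q.im ^ 2 := by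
      rw [Complex.sq_norm, Complex.normSq_apply]
      simp
      ring
    have hqre : q.re = 1/2 - M.re := by simp [hq]
    have h2 : ‖q + n‖ ^ 2 ≤ ((n : ℝ) + 1) ^ 2 - s * ((n : ℝ) + 1) := by
      rw [habs]
      have hss : s = 1 + M.re := hs
      nlinarith [hMn, hqre]
    have hbern : 1 - s / ((n : ℝ) + 1) ≤ ((n : ℝ) / ((n : ℝ) + 1)) ^ s := by
      have h := one_add_mul_self_le_rpow_one_add
        (show (-1 : ℝ) ≤ -(1 / ((n : ℝ) + 1)) by
          rw [neg_le_neg_iff, div_le_one (by linarith)]; linarith) (le_of_lt hs1)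
      have heq : (1 : ℝ) + -(1 / ((n : ℝ) + 1)) = (n : ℝ) / ((n : ℝ) + 1) := by
        field_simp
        ring
      rw [heq] at h
      calc 1 - s / ((n : ℝ) + 1) = 1 + s * -(1 / ((n : ℝ) + 1)) := by ring
        _ ≤ _ := h
    have hdiv : ((n : ℝ) / ((n : ℝ) + 1)) ^ s = (n : ℝ) ^ s / ((n : ℝ) + 1) ^ s :=
      Real.div_rpow (le_of_lt hnpos) (by linarith : (0:ℝ) ≤ (n:ℝ)+1) s
    have hp1 : (0 : ℝ) < ((n : ℝ) + 1) ^ s := Real.rpow_pos_of_pos (by linarith) s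
    have hchain : ‖q + n‖ ^ 2
        ≤ ((n : ℝ) + 1) ^ 2 * ((n : ℝ) ^ s / ((n : ℝ) + 1) ^ s) := by
      calc ‖q + n‖ ^ 2 ≤ ((n : ℝ) + 1) ^ 2 - s * ((n : ℝ) + 1) := h2
        _ = ((n : ℝ) + 1) ^ 2 * (1 - s / ((n : ℝ) + 1)) := by field_simp
        _ ≤ ((n : ℝ) + 1) ^ 2 * (((n : ℝ)) / ((n : ℝ) + 1)) ^ s :=
            mul_le_mul_of_nonneg_left hbern (by positivity)
        _ = ((n : ℝ) + 1) ^ 2 * ((n : ℝ) ^ s / ((n : ℝ) + 1) ^ s) := by rw [hdiv]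
    calc ‖q + n‖ ^ 2 * ((n : ℝ) + 1) ^ s
        ≤ ((n : ℝ) + 1) ^ 2 * ((n : ℝ) ^ s / ((n : ℝ) + 1) ^ s) * ((n : ℝ) + 1) ^ s :=
          mul_le_mul_of_nonneg_right hchain (le_of_lt hp1)
      _ = (n : ℝ) ^ s * ((n : ℝ) + 1) ^ 2 := by field_simp
  have hstep : ∀ n : ℕ, N ≤ n → c (n + 1) * (((n : ℝ) + 1)) ^ s ≤ c n * (n : ℝ) ^ s := by
    intro n hn
    rw [hcsucc n]
    have hp2 : (0 : ℝ) < ((n : ℝ) + 1) ^ 2 := by positivity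
    rw [div_mul_eq_mul_div, div_le_iff₀ hp2]
    calc c n * ‖q + n‖ ^ 2 * ((n : ℝ) + 1) ^ s
        = c n * (‖q + n‖ ^ 2 * ((n : ℝ) + 1) ^ s) := by ring
      _ ≤ c n * ((n : ℝ) ^ s * ((n : ℝ) + 1) ^ 2) :=
          mul_le_mul_of_nonneg_left (hNkey n hn) (hcnonneg n)
      _ = c n * (n : ℝ) ^ s * ((n : ℝ) + 1) ^ 2 := by ring
  set D : ℝ := c N * (N : ℝ) ^ s with hD
  have hmono : ∀ k : ℕ, c (N + k) * ((N + k : ℕ) : ℝ) ^ s ≤ D := by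
    intro k
    induction k with
    | zero => simp [hD]
    | succ k ih =>
      have h := hstep (N + k) (Nat.le_add_right N k)
      have h2 := le_trans h ih
      have hcast : ((N + k : ℕ) : ℝ) + 1 = ((N + (k + 1) : ℕ) : ℝ) := by push_cast; ring
      rw [hcast] at h2
      exact h2
  have hsumm : Summable c := by
    rw [← summable_nat_add_iff N]
    refine Summable.of_nonneg_of_le (g := fun n => c (n + N))
      (f := fun k => D * (((k + N : ℕ) : ℝ) ^ s)⁻¹) (fun k => hcnonneg _) (fun k => ?_) ?_
    · skip
      have hpos : (0 : ℝ) < ((k + N : ℕ) : ℝ) ^ s := by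
        apply Real.rpow_pos_of_pos
        have : 1 ≤ k + N := le_trans hN1 (Nat.le_add_left N k)
        exact_mod_cast this
      have h := hmono k
      rw [add_comm N k] at h
      show c (k + N) ≤ D * (((k + N : ℕ) : ℝ) ^ s)⁻¹
      rw [mul_comm D, ← div_eq_inv_mul, le_div_iff₀ hpos]
      exact h
    · have hbase : Summable (fun m : ℕ => D * (((m : ℕ) : ℝ) ^ s)⁻¹) :=
        (Real.summable_nat_rpow_inv.2 hs1).mul_left D
      exact (summable_nat_add_iff N).2 hbase
  set K : ℝ := ∑' n, c n with hK
  have hK1 : 1 ≤ K := by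
    rw [← hc0]
    exact Summable.le_tsum hsumm 0 (fun n _ => hcnonneg n)
  refine ⟨K, hK1, ?_⟩
  intro x hx0 hx1
  have hterm : ∀ n : ℕ,
      ‖(ascPochhammer ℂ n).eval q * (ascPochhammer ℂ n).eval q /
        ((ascPochhammer ℂ n).eval 1 * (n.factorial : ℂ)) * (x : ℂ) ^ n‖ ≤ c n := by
    intro n
    rw [show ((1:ℂ)) = (1:ℂ) from rfl]
    have h1 : (ascPochhammer ℂ n).eval (1 : ℂ) = (n.factorial : ℂ) :=
      ascPochhammer_eval_one ℂ n
    rw [h1]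
    have hfac : (0:ℝ) < (n.factorial : ℝ) := by exact_mod_cast n.factorial_pos
    simp only [norm_mul, norm_div, norm_pow]
    simp only [Complex.norm_natCast, Complex.norm_real, Real.norm_eq_abs, abs_of_nonneg hx0]
    calc ‖(ascPochhammer ℂ n).eval q‖ * ‖(ascPochhammer ℂ n).eval q‖ /
          ((n.factorial : ℝ) * (n.factorial : ℝ)) * x ^ n
        ≤ ‖(ascPochhammer ℂ n).eval q‖ * ‖(ascPochhammer ℂ n).eval q‖ /
          ((n.factorial : ℝ) * (n.factorial : ℝ)) * 1 := by
          apply mul_le_mul_of_nonneg_left (pow_le_one₀ hx0 (le_of_lt hx1)) (by positivity)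
      _ = c n := by
          rw [hcdef]
          field_simp
  have hsumm2 : Summable (fun n : ℕ =>
      ‖(ascPochhammer ℂ n).eval q * (ascPochhammer ℂ n).eval q /
        ((ascPochhammer ℂ n).eval 1 * (n.factorial : ℂ)) * (x : ℂ) ^ n‖) :=
    Summable.of_nonneg_of_le (fun n => norm_nonneg _) hterm hsumm
  rw [GaussF]
  calc ‖∑' n : ℕ, (ascPochhammer ℂ n).eval q * (ascPochhammer ℂ n).eval q /
        ((ascPochhammer ℂ n).eval 1 * (n.factorial : ℂ)) * (x : ℂ) ^ n‖
      ≤ ∑' n : ℕ, ‖(ascPochhammer ℂ n).eval q * (ascPochhammer ℂ n).eval q /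
        ((ascPochhammer ℂ n).eval 1 * (n.factorial : ℂ)) * (x : ℂ) ^ n‖ :=
        norm_tsum_le_tsum_norm hsumm2
    _ ≤ K := Summable.tsum_le_tsum hterm hsumm2 hsumm

theorem stmt12 (M : ℂ) (hM : 0 < M.re) (hM' : M.re ≠ 1/2) (a : ℝ) (ha : a > -1) :
    ∃ C > 0, ∀ z : ℝ, 1 < z →
      (0 < M.re → M.re < 1/2 →
        (∫ y in Set.Ioo (0:ℝ) (z - 1),
            y ^ a * ((z + 1) ^ 2 - y ^ 2) ^ (-(1/2) + M.re) *
              ‖GaussF (1/2 - M) (1/2 - M) 1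
                  ((((z - 1) ^ 2 - y ^ 2) / ((z + 1) ^ 2 - y ^ 2) : ℝ) : ℂ)‖)
          ≤ C * (z - 1) ^ (1 + a) * z ^ (M.re - 1/2)) ∧
      (1/2 < M.re →
        (∫ y in Set.Ioo (0:ℝ) (z - 1),
            y ^ a * ((z + 1) ^ 2 - y ^ 2) ^ (-(1/2) + M.re) *
              ‖GaussF (1/2 - M) (1/2 - M) 1
                  ((((z - 1) ^ 2 - y ^ 2) / ((z + 1) ^ 2 - y ^ 2) : ℝ) : ℂ)‖)
          ≤ C * (z - 1) ^ (1 + a) * (z + 1) ^ (2 * M.re - 1)) := by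
  obtain ⟨K, hK1, hKb⟩ := gaussF_bound M hM
  have hK0 : (0:ℝ) < K := lt_of_lt_of_le one_pos hK1
  have ha1 : (0:ℝ) < 1 + a := by linarith
  refine ⟨K / (1 + a), by positivity, ?_⟩
  intro z hz
  have hb : (0:ℝ) < z - 1 := by linarith
  have hz0 : (0:ℝ) < z := by linarith
  -- integrability and value of ∫ y^a
  have hii : IntervalIntegrable (fun y : ℝ => y ^ a) volume 0 (z - 1) :=
    intervalIntegral.intervalIntegrable_rpow' ha
  have hint : IntegrableOn (fun y : ℝ => y ^ a) (Set.Ioo 0 (z - 1)) :=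
    hii.1.mono_set Set.Ioo_subset_Ioc_self
  have hval : ∫ y in Set.Ioo (0:ℝ) (z - 1), y ^ a = (z - 1) ^ (a + 1) / (a + 1) := by
    rw [← integral_Ioc_eq_integral_Ioo, ← intervalIntegral.integral_of_le (le_of_lt hb),
      integral_rpow (Or.inl ha), Real.zero_rpow (by linarith)]
    ring
  have hmeas : MeasurableSet (Set.Ioo (0:ℝ) (z - 1)) := measurableSet_Ioo
  -- facts valid for all y in the interval
  have hyfacts : ∀ y ∈ Set.Ioo (0:ℝ) (z - 1),
      (0:ℝ) < (z + 1) ^ 2 - y ^ 2 ∧ z ≤ (z + 1) ^ 2 - y ^ 2 ∧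
      ‖GaussF (1/2 - M) (1/2 - M) 1
        ((((z - 1) ^ 2 - y ^ 2) / ((z + 1) ^ 2 - y ^ 2) : ℝ) : ℂ)‖ ≤ K := by
    intro y hy
    obtain ⟨hy0, hy1⟩ := hy
    have hysq : y ^ 2 < (z - 1) ^ 2 := by nlinarith
    have hP4 : 4 * z < (z + 1) ^ 2 - y ^ 2 := by nlinarith
    have hP0 : (0:ℝ) < (z + 1) ^ 2 - y ^ 2 := by nlinarith
    have hx0 : (0:ℝ) ≤ ((z - 1) ^ 2 - y ^ 2) / ((z + 1) ^ 2 - y ^ 2) :=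
      div_nonneg (by nlinarith) hP0.le
    have hx1 : ((z - 1) ^ 2 - y ^ 2) / ((z + 1) ^ 2 - y ^ 2) < 1 :=
      (div_lt_one hP0).2 (by nlinarith)
    exact ⟨hP0, by nlinarith, hKb _ hx0 hx1⟩
  constructor
  · intro _ hlt
    set B : ℝ := z ^ (M.re - 1/2) with hB
    have hB0 : 0 < B := Real.rpow_pos_of_pos hz0 _
    have hgi : Integrable (fun y : ℝ => K * B * y ^ a)
        (volume.restrict (Set.Ioo (0:ℝ) (z - 1))) := hint.const_mul _
    have hle : (∫ y in Set.Ioo (0:ℝ) (z - 1),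
        y ^ a * ((z + 1) ^ 2 - y ^ 2) ^ (-(1/2) + M.re) *
          ‖GaussF (1/2 - M) (1/2 - M) 1
            ((((z - 1) ^ 2 - y ^ 2) / ((z + 1) ^ 2 - y ^ 2) : ℝ) : ℂ)‖)
        ≤ ∫ y in Set.Ioo (0:ℝ) (z - 1), K * B * y ^ a := by
      apply integral_mono_of_nonneg
      · apply ae_restrict_of_forall_mem hmeas
        intro y hy
        obtain ⟨hP0, _, _⟩ := hyfacts y hy
        have hy0 := hy.1
        positivity
      · exact hgi
      · apply ae_restrict_of_forall_mem hmeas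
        intro y hy
        obtain ⟨hP0, hPz, hF⟩ := hyfacts y hy
        have hy0 := hy.1
        have hya : (0:ℝ) ≤ y ^ a := Real.rpow_nonneg hy0.le a
        have hPe : ((z + 1) ^ 2 - y ^ 2) ^ (-(1/2) + M.re) ≤ B := by
          rw [hB, show -(1/2:ℝ) + M.re = M.re - 1/2 by ring]
          exact Real.rpow_le_rpow_of_nonpos hz0 hPz (by linarith)
        calc y ^ a * ((z + 1) ^ 2 - y ^ 2) ^ (-(1/2) + M.re) *
              ‖GaussF (1/2 - M) (1/2 - M) 1
                ((((z - 1) ^ 2 - y ^ 2) / ((z + 1) ^ 2 - y ^ 2) : ℝ) : ℂ)‖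
            ≤ y ^ a * B * K := by
              apply mul_le_mul (mul_le_mul_of_nonneg_left hPe hya) hF
                (norm_nonneg _) (by positivity)
          _ = K * B * y ^ a := by ring
    calc (∫ y in Set.Ioo (0:ℝ) (z - 1),
        y ^ a * ((z + 1) ^ 2 - y ^ 2) ^ (-(1/2) + M.re) *
          ‖GaussF (1/2 - M) (1/2 - M) 1
            ((((z - 1) ^ 2 - y ^ 2) / ((z + 1) ^ 2 - y ^ 2) : ℝ) : ℂ)‖)
        ≤ ∫ y in Set.Ioo (0:ℝ) (z - 1), K * B * y ^ a := hle
      _ = K * B * ((z - 1) ^ (a + 1) / (a + 1)) := by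
          rw [MeasureTheory.integral_const_mul, hval]
      _ = K / (1 + a) * (z - 1) ^ (1 + a) * B := by
          rw [show (1:ℝ) + a = a + 1 from add_comm 1 a]
          field_simp
  · intro hlt
    set B : ℝ := (z + 1) ^ (2 * M.re - 1) with hB
    have hz1 : (0:ℝ) < z + 1 := by linarith
    have hB0 : 0 < B := Real.rpow_pos_of_pos hz1 _
    have hgi : Integrable (fun y : ℝ => K * B * y ^ a)
        (volume.restrict (Set.Ioo (0:ℝ) (z - 1))) := hint.const_mul _
    have hle : (∫ y in Set.Ioo (0:ℝ) (z - 1),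
        y ^ a * ((z + 1) ^ 2 - y ^ 2) ^ (-(1/2) + M.re) *
          ‖GaussF (1/2 - M) (1/2 - M) 1
            ((((z - 1) ^ 2 - y ^ 2) / ((z + 1) ^ 2 - y ^ 2) : ℝ) : ℂ)‖)
        ≤ ∫ y in Set.Ioo (0:ℝ) (z - 1), K * B * y ^ a := by
      apply integral_mono_of_nonneg
      · apply ae_restrict_of_forall_mem hmeas
        intro y hy
        obtain ⟨hP0, _, _⟩ := hyfacts y hy
        have hy0 := hy.1
        positivity
      · exact hgi
      · apply ae_restrict_of_forall_mem hmeas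
        intro y hy
        obtain ⟨hP0, hPz, hF⟩ := hyfacts y hy
        have hy0 := hy.1
        have hya : (0:ℝ) ≤ y ^ a := Real.rpow_nonneg hy0.le a
        have hPe : ((z + 1) ^ 2 - y ^ 2) ^ (-(1/2) + M.re) ≤ B := by
          rw [hB]
          have hPle : (z + 1) ^ 2 - y ^ 2 ≤ (z + 1) ^ 2 := by nlinarith [hy.1]
          have h1 : ((z + 1) ^ 2 - y ^ 2) ^ (-(1/2) + M.re)
              ≤ ((z + 1) ^ 2) ^ (-(1/2) + M.re) :=
            Real.rpow_le_rpow hP0.le hPle (by linarith)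
          have h2 : ((z + 1) ^ 2) ^ (-(1/2) + M.re) = (z + 1) ^ (2 * M.re - 1) := by
            rw [← Real.rpow_natCast (z + 1) 2, ← Real.rpow_mul hz1.le]
            congr 1
            push_cast
            ring
          rw [← h2]
          exact h1
        calc y ^ a * ((z + 1) ^ 2 - y ^ 2) ^ (-(1/2) + M.re) *
              ‖GaussF (1/2 - M) (1/2 - M) 1
                ((((z - 1) ^ 2 - y ^ 2) / ((z + 1) ^ 2 - y ^ 2) : ℝ) : ℂ)‖
            ≤ y ^ a * B * K := by
              apply mul_le_mul (mul_le_mul_of_nonneg_left hPe hya) hF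
                (norm_nonneg _) (by positivity)
          _ = K * B * y ^ a := by ring
    calc (∫ y in Set.Ioo (0:ℝ) (z - 1),
        y ^ a * ((z + 1) ^ 2 - y ^ 2) ^ (-(1/2) + M.re) *
          ‖GaussF (1/2 - M) (1/2 - M) 1
            ((((z - 1) ^ 2 - y ^ 2) / ((z + 1) ^ 2 - y ^ 2) : ℝ) : ℂ)‖)
        ≤ ∫ y in Set.Ioo (0:ℝ) (z - 1), K * B * y ^ a := hle
      _ = K * B * ((z - 1) ^ (a + 1) / (a + 1)) := by
          rw [MeasureTheory.integral_const_mul, hval]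
      _ = K / (1 + a) * (z - 1) ^ (1 + a) * B := by
          rw [show (1:ℝ) + a = a + 1 from add_comm 1 a]
          field_simp
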